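/- Let f₀ ∈ L²(0,1) and a ∈ (0,1), and define f⋆ ∈ L²(0,1) by f⋆(y) = f₀(y/a) for y ∈ (0,a) and f⋆(y) = 1 for y ∈ (a,1). Then with Ĵ(f) = ‖f - id‖² - (3/4)(‖f‖² - 1/3)², one has Ĵ(f⋆) = a² Ĵ(f₀). -/

import Mathlib

open MeasureTheory

theorem stmt_7 (f₀ fstar : ℝ → ℝ) (a : ℝ) (ha : a ∈ Set.Ioo (0 : ℝ) 1)
    (hf₀ : MemLp f₀ 2 (volume.restrict (Set.Ioo (0 : ℝ) 1)))
    (hstar : ∀ y ∈ Set.Ioo (0 : ℝ) 1, fstar y = if y < a then f₀ (y / a) else 1) :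
    ((∫ y in Set.Ioo (0 : ℝ) 1, (fstar y - y) ^ 2) -
        3 / 4 * ((∫ y in Set.Ioo (0 : ℝ) 1, (fstar y) ^ 2) - 1 / 3) ^ 2) =
      a ^ 2 * ((∫ y in Set.Ioo (0 : ℝ) 1, (f₀ y - y) ^ 2) -
        3 / 4 * ((∫ y in Set.Ioo (0 : ℝ) 1, (f₀ y) ^ 2) - 1 / 3) ^ 2) := by
  obtain ⟨ha0, ha1⟩ := ha
  have hane : a ≠ 0 := ne_of_gt ha0
  -- convert Ioo integrals to interval integrals
  have hIoo : ∀ g : ℝ → ℝ, (∫ y in Set.Ioo (0:ℝ) 1, g y) = ∫ y in (0:ℝ)..1, g y := by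
    intro g
    rw [intervalIntegral.integral_of_le zero_le_one,
      MeasureTheory.integral_Ioc_eq_integral_Ioo]
  rw [hIoo, hIoo, hIoo, hIoo]
  -- basic integrability of f₀ and friends on [0,1]
  have hsqIoo : IntegrableOn (fun y => f₀ y ^ 2) (Set.Ioo (0:ℝ) 1) := hf₀.integrable_sq
  have hfIoo : IntegrableOn f₀ (Set.Ioo (0:ℝ) 1) := hf₀.integrable one_le_two
  have Isq : IntervalIntegrable (fun y => f₀ y ^ 2) volume 0 1 := by
    rw [intervalIntegrable_iff_integrableOn_Ioo_of_le zero_le_one]; exact hsqIoo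
  have If : IntervalIntegrable f₀ volume 0 1 := by
    rw [intervalIntegrable_iff_integrableOn_Ioo_of_le zero_le_one]; exact hfIoo
  have Ixf : IntervalIntegrable (fun x => x * f₀ x) volume 0 1 :=
    If.continuousOn_mul continuousOn_id
  set S := ∫ x in (0:ℝ)..1, f₀ x ^ 2 with hS
  set T := ∫ x in (0:ℝ)..1, x * f₀ x with hT
  -- a helper: ∫ (f₀ x - c x)^2 = S - 2 c T + c^2/3
  have hexp : ∀ c : ℝ, (∫ x in (0:ℝ)..1, (f₀ x - c * x) ^ 2)
      = S - 2 * c * T + c ^ 2 / 3 := by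
    intro c
    have h1 : ∀ x : ℝ, (f₀ x - c * x) ^ 2
        = f₀ x ^ 2 - 2 * c * (x * f₀ x) + c ^ 2 * x ^ 2 := fun x => by ring
    simp only [h1]
    have Ix2 : IntervalIntegrable (fun x : ℝ => c ^ 2 * x ^ 2) volume 0 1 :=
      (continuous_const.mul (continuous_pow 2)).intervalIntegrable 0 1
    have Icxf : IntervalIntegrable (fun x : ℝ => 2 * c * (x * f₀ x)) volume 0 1 :=
      Ixf.const_mul _
    rw [intervalIntegral.integral_add (Isq.sub Icxf) Ix2,
      intervalIntegral.integral_sub Isq Icxf,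
      intervalIntegral.integral_const_mul, intervalIntegral.integral_const_mul,
      integral_pow]
    ring
  -- interval integrability of the scaled composition pieces on [0, a]
  have Icomp : ∀ g : ℝ → ℝ, IntervalIntegrable g volume 0 1 →
      IntervalIntegrable (fun y => g (y / a)) volume 0 a := by
    intro g hg
    have := hg.comp_mul_right (c := a⁻¹)
    simp only [div_eq_mul_inv]
    rw [zero_div, one_div, inv_inv] at this
    exact this
  -- congruence helpers
  have hIcong : ∀ (u v : ℝ), u ≤ v → ∀ f g : ℝ → ℝ, (∀ y ∈ Set.Ioo u v, f y = g y) →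
      (∫ y in u..v, f y) = ∫ y in u..v, g y := by
    intro u v h f g hfg
    rw [intervalIntegral.integral_of_le h, intervalIntegral.integral_of_le h,
      MeasureTheory.integral_Ioc_eq_integral_Ioo, MeasureTheory.integral_Ioc_eq_integral_Ioo]
    exact setIntegral_congr_fun measurableSet_Ioo hfg
  have aeIoc : ∀ (u v : ℝ) (f g : ℝ → ℝ), (∀ y ∈ Set.Ioo u v, f y = g y) →
      f =ᵐ[volume.restrict (Set.Ioc u v)] g := by
    intro u v f g h
    rw [← Measure.restrict_congr_set Ioo_ae_eq_Ioc]
    exact (ae_restrict_iff' measurableSet_Ioo).2 (Filter.Eventually.of_forall h)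
  -- pointwise descriptions of fstar
  have hg1 : ∀ y ∈ Set.Ioo (0:ℝ) a, fstar y = f₀ (y / a) := fun y hy => by
    rw [hstar y ⟨hy.1, hy.2.trans ha1⟩, if_pos hy.2]
  have hg2 : ∀ y ∈ Set.Ioo a 1, fstar y = 1 := fun y hy => by
    rw [hstar y ⟨ha0.trans hy.1, hy.2⟩, if_neg (not_lt.2 hy.1.le)]
  -- integrability of the pieces
  have Ig2 : IntervalIntegrable (fun x => (f₀ x - a * x) ^ 2) volume 0 1 := by
    have h1 : ∀ x : ℝ, (f₀ x - a * x) ^ 2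
        = f₀ x ^ 2 - 2 * a * (x * f₀ x) + a ^ 2 * x ^ 2 := fun x => by ring
    simp only [h1]
    exact (Isq.sub (Ixf.const_mul _)).add
      ((continuous_const.mul (continuous_pow 2)).intervalIntegrable 0 1)
  have I1a : IntervalIntegrable (fun y => fstar y ^ 2) volume 0 a :=
    (Icomp (fun x => f₀ x ^ 2) Isq).congr_ae (by
      rw [Set.uIoc_of_le ha0.le]
      exact aeIoc 0 a _ _ (fun y hy => by rw [hg1 y hy]))
  have I1b : IntervalIntegrable (fun y => fstar y ^ 2) volume a 1 :=
    (intervalIntegrable_const (c := (1:ℝ))).congr_ae (by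
      rw [Set.uIoc_of_le ha1.le]
      exact aeIoc a 1 _ _ (fun y hy => by rw [hg2 y hy, one_pow]))
  have I2a : IntervalIntegrable (fun y => (fstar y - y) ^ 2) volume 0 a :=
    (Icomp (fun x => (f₀ x - a * x) ^ 2) Ig2).congr_ae (by
      rw [Set.uIoc_of_le ha0.le]
      refine aeIoc 0 a _ _ (fun y hy => ?_)
      rw [hg1 y hy]
      field_simp)
  have I2b : IntervalIntegrable (fun y => (fstar y - y) ^ 2) volume a 1 :=
    (((continuous_const.sub continuous_id).pow 2).intervalIntegrable a 1).congr_ae (by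
      rw [Set.uIoc_of_le ha1.le]
      exact aeIoc a 1 (fun y => ((1:ℝ) - y) ^ 2) (fun y => (fstar y - y) ^ 2)
        (fun y hy => by simp [hg2 y hy]))
  -- compute ∫ fstar^2
  have e1 : (∫ y in (0:ℝ)..1, fstar y ^ 2) = a * S + (1 - a) := by
    rw [← intervalIntegral.integral_add_adjacent_intervals I1a I1b]
    have p1 : (∫ y in (0:ℝ)..a, fstar y ^ 2) = a * S := by
      rw [hIcong 0 a ha0.le _ (fun y => f₀ (y / a) ^ 2) (fun y hy => by rw [hg1 y hy]),
        intervalIntegral.integral_comp_div (fun x => f₀ x ^ 2) hane]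
      simp [hane, smul_eq_mul, hS]
    have p2 : (∫ y in a..(1:ℝ), fstar y ^ 2) = 1 - a := by
      rw [hIcong a 1 ha1.le _ (fun _ => (1:ℝ)) (fun y hy => by rw [hg2 y hy, one_pow])]
      simp
    rw [p1, p2]
  -- compute ∫ (fstar - id)^2
  have e2 : (∫ y in (0:ℝ)..1, (fstar y - y) ^ 2)
      = a * (S - 2 * a * T + a ^ 2 / 3) + (1 - a) ^ 3 / 3 := by
    rw [← intervalIntegral.integral_add_adjacent_intervals I2a I2b]
    have p1 : (∫ y in (0:ℝ)..a, (fstar y - y) ^ 2)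
        = a * (S - 2 * a * T + a ^ 2 / 3) := by
      rw [hIcong 0 a ha0.le _ (fun y => (f₀ (y / a) - a * (y / a)) ^ 2)
          (fun y hy => by rw [hg1 y hy]; field_simp),
        intervalIntegral.integral_comp_div (fun x => (f₀ x - a * x) ^ 2) hane]
      rw [smul_eq_mul, zero_div, div_self hane, hexp a]
    have p2 : (∫ y in a..(1:ℝ), (fstar y - y) ^ 2) = (1 - a) ^ 3 / 3 := by
      rw [hIcong a 1 ha1.le _ (fun y => (1 - y) ^ 2) (fun y hy => by rw [hg2 y hy]),
        intervalIntegral.integral_comp_sub_left (fun x => x ^ 2) 1]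
      rw [integral_pow]
      norm_num
    rw [p1, p2]
  -- compute RHS integrals
  have e3 : (∫ y in (0:ℝ)..1, (f₀ y - y) ^ 2) = S - 2 * T + 1 / 3 := by
    have := hexp 1
    simp only [one_mul, mul_one, one_pow] at this
    exact this
  rw [e1, e2, e3]
  ring
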